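/- Define FAd(X) = {(⌊u⌋, t) : ⌊u⌋ sorted nonempty word on X, 1 ≤ t ≤ |u|, and t = 1 or ⌊u⌋_t > ⌊u⌋_{t−1}}. Then for every u ∈ X⁺ and 1 ≤ m ≤ |u|, the pair (⌊u⌋, τ_u(m)) lies in FAd(X), and the map [u]_m ↦ (⌊u⌋, τ_u(m)) is surjective onto FAd(X). -/

import Mathlib

variable {X : Type*} [LinearOrder X] [Inhabited X]

/-- ⌊u⌋: the nondecreasing rearrangement of the word u. -/
def sortW (u : List X) : List X := u.insertionSort (· ≤ ·)

/-- λ_{⌊u⌋}(x): the first (1-based) position of the letter x in ⌊u⌋. -/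
def lam (u : List X) (x : X) : ℕ := (sortW u).idxOf x + 1

/-- τ_u(m) = λ_{⌊u⌋}(u_m), where u_m is the m-th (1-based) letter of u. -/
def tau (u : List X) (m : ℕ) : ℕ := lam u (u.getD (m - 1) default)

/-- FAd(X): pairs (⌊u⌋, t) with ⌊u⌋ a sorted nonempty word, 1 ≤ t ≤ |u|, and
either t = 1 or the t-th letter of ⌊u⌋ is strictly greater than the (t−1)-th. -/
def FAdSet : Set (List X × ℕ) :=
  {p | p.1 ≠ [] ∧ List.Pairwise (· ≤ ·) p.1 ∧ 1 ≤ p.2 ∧ p.2 ≤ p.1.length ∧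
    (p.2 = 1 ∨ p.1.getD (p.2 - 2) default < p.1.getD (p.2 - 1) default)}

set_option linter.unusedSectionVars false in
private lemma indexOf_le_of_getElem {l : List X} : ∀ {i : ℕ} (h : i < l.length),
    l.idxOf l[i] ≤ i := by
  induction l with
  | nil => intro i h; simp at h
  | cons a l ih =>
    intro i h
    cases i with
    | zero => simp [List.idxOf_cons_self]
    | succ i =>
      have he : (a :: l)[i+1] = l[i]'(by simpa using h) := rfl
      rw [he]
      by_cases hax : a = l[i]'(by simpa using h)
      · rw [List.idxOf_cons_eq _ hax]; omega
      · rw [List.idxOf_cons_ne _ hax]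
        exact Nat.succ_le_succ (ih _)

set_option linter.unusedSectionVars false in
private lemma ne_of_lt_indexOf {l : List X} {x : X} : ∀ {j : ℕ} (hj : j < l.length),
    j < l.idxOf x → l[j] ≠ x := by
  induction l with
  | nil => intro j hj; simp at hj
  | cons a l ih =>
    intro j hj h
    by_cases hax : a = x
    · rw [List.idxOf_cons_eq _ hax] at h; omega
    · rw [List.idxOf_cons_ne _ hax] at h
      cases j with
      | zero => simpa using hax
      | succ j => exact ih (by simpa using hj) (Nat.lt_of_succ_lt_succ h)

set_option linter.unusedSectionVars false in
private lemma sorted_le {l : List X} (hs : l.Pairwise (· ≤ ·)) {i j : ℕ}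
    (hij : i ≤ j) (hj : j < l.length) : l[i]'(lt_of_le_of_lt hij hj) ≤ l[j] := by
  rcases eq_or_lt_of_le hij with rfl | h
  · exact le_refl _
  · exact hs.rel_get_of_lt (a := ⟨i, lt_of_le_of_lt hij hj⟩) (b := ⟨j, hj⟩) h

/-- For every u ∈ X⁺ and 1 ≤ m ≤ |u|, (⌊u⌋, τ_u(m)) ∈ FAd(X), and
the map [u]_m ↦ (⌊u⌋, τ_u(m)) is surjective onto FAd(X). -/
theorem stmt19 :
    (∀ u : List X, ∀ m : ℕ, u ≠ [] → 1 ≤ m → m ≤ u.length →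
      (sortW u, tau u m) ∈ FAdSet) ∧
    (∀ p ∈ FAdSet (X := X), ∃ u : List X, ∃ m : ℕ,
      u ≠ [] ∧ 1 ≤ m ∧ m ≤ u.length ∧ (sortW u, tau u m) = p) := by
  constructor
  · intro u m hu h1 hm
    have hperm : (sortW u).Perm u := u.perm_insertionSort (· ≤ ·)
    have hlen : (sortW u).length = u.length := hperm.length_eq
    have hs : (sortW u).Pairwise (· ≤ ·) := List.pairwise_insertionSort (· ≤ ·) u
    set x : X := u.getD (m - 1) default with hx
    have hxm : x ∈ u := by
      rw [hx, List.getD_eq_getElem u default (by omega)]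
      exact List.getElem_mem _
    have hxs : x ∈ sortW u := hperm.mem_iff.2 hxm
    have hidx : (sortW u).idxOf x < (sortW u).length := List.idxOf_lt_length_iff.2 hxs
    have hnil : sortW u ≠ [] := by
      intro e
      rw [e] at hlen
      simp at hlen
      omega
    refine ⟨hnil, hs, by simp [tau, lam], ?_, ?_⟩
    · show tau u m ≤ (sortW u).length
      simp only [tau, lam, ← hx]; omega
    · show tau u m = 1 ∨ _
      simp only [tau, lam, ← hx]
      by_cases h0 : (sortW u).idxOf x = 0
      · left; simp [h0]
      · right
        have hgetx : (sortW u).getD ((sortW u).idxOf x + 1 - 1) default = x := by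
          rw [List.getD_eq_getElem _ _ (by omega)]
          simpa using List.getElem_idxOf hidx
        rw [hgetx]
        have hlt : (sortW u).idxOf x - 1 < (sortW u).length := by omega
        rw [List.getD_eq_getElem _ _ (by omega)]
        have h1 : (sortW u)[(sortW u).idxOf x + 1 - 2]'(by omega) ≠ x := by
          have := ne_of_lt_indexOf (l := sortW u) (x := x)
            (j := (sortW u).idxOf x + 1 - 2) (by omega) (by omega)
          exact this
        have h2 : (sortW u)[(sortW u).idxOf x + 1 - 2]'(by omega) ≤ x := by
          have := sorted_le hs (i := (sortW u).idxOf x + 1 - 2)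
            (j := (sortW u).idxOf x) (by omega) hidx
          rwa [List.getElem_idxOf hidx] at this
        exact lt_of_le_of_ne h2 h1
  · rintro ⟨w, t⟩ ⟨hne, hs, h1, ht, hor⟩
    refine ⟨w, t, hne, h1, by simpa using ht, ?_⟩
    have hsw : sortW w = w := hs.insertionSort_eq
    have hlt : t - 1 < w.length := by simp at ht; omega
    set x : X := w.getD (t - 1) default with hx
    have hxe : x = w[t-1] := by rw [hx, List.getD_eq_getElem _ _ hlt]
    have hle : w.idxOf x ≤ t - 1 := hxe ▸ indexOf_le_of_getElem hlt
    have heq : w.idxOf x = t - 1 := by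
      rcases hor with rfl | hlt2
      · omega
      · by_contra hne2
        have hidxlt : w.idxOf x < t - 1 := lt_of_le_of_ne hle hne2
        have hmem : x ∈ w := hxe ▸ List.getElem_mem _
        have hidx : w.idxOf x < w.length := List.idxOf_lt_length_iff.2 hmem
        have hgx : w[w.idxOf x] = x := List.getElem_idxOf hidx
        have hle2 : w[w.idxOf x] ≤ w[t-2]'(by omega) := sorted_le hs (by omega) (by omega)
        rw [List.getD_eq_getElem _ _ (by omega : t - 2 < w.length)] at hlt2
        rw [hgx] at hle2
        exact absurd hlt2 (not_lt.2 hle2)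
    have htau : tau w t = t := by
      simp only [tau, lam, hsw, ← hx, heq]; omega
    simp [hsw, htau]
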